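/- Let G be a group acting on a crossed module (M,L,∂), let N = ∂(M) (a normal subgroup of L, invariant under the G-action), Q = L/N the quotient group with quotient map π : L → Q and the induced G-action on Q, and let (P, α) be an (M → L)-bitorsor. Then: (a) for all p, q ∈ P one has π(α(p)) = π(α(q)), so the element π_*(P) := π(α(p)⁻¹) ∈ Q is independent of the choice of p ∈ P; (b) π_*(P) is a G-fixed point of Q: ᵍ(π_*(P)) = π_*(P) for all g ∈ G. -/

import Mathlib

/-- Lemmas 25 and 26: for an `(M → L)`-bitorsor `(P, α)`, the class
`π_*(P) = π((α p)⁻¹) ∈ Q = L/∂(M)` does not depend on `p ∈ P`, and it is a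
`G`-fixed point of `Q` (the `G`-action on `Q` being induced by the action on `L`,
i.e. `ᵍ(π y) = π(ᵍy)`). -/
theorem statement16
    {G M L : Type} [Group G] [Group M] [Group L]
    (pd : M →* L) (ρ : L →* MulAut M)
    -- crossed module axioms
    (hpeif1 : ∀ (x : L) (m : M), pd (ρ x m) = x * pd m * x⁻¹)
    (hpeif2 : ∀ (n m : M), ρ (pd n) m = n * m * n⁻¹)
    -- G-action on the crossed module
    (φM : G →* MulAut M) (φL : G →* MulAut L)
    (hact1 : ∀ (g : G) (m : M), pd (φM g m) = φL g (pd m))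
    (hact2 : ∀ (g : G) (x : L) (m : M), φM g (ρ x m) = ρ (φL g x) (φM g m))
    -- the bitorsor (P, α)
    {P : Type} (hP : Nonempty P)
    (aG : G → P → P) (aM : P → M → P) (α : P → L)
    (haG1 : ∀ p : P, aG 1 p = p)
    (haGmul : ∀ (g h : G) (p : P), aG (g * h) p = aG g (aG h p))
    (haM1 : ∀ p : P, aM p 1 = p)
    (haMmul : ∀ (p : P) (m n : M), aM p (m * n) = aM (aM p m) n)
    (hcompat : ∀ (g : G) (p : P) (m : M), aG g (aM p m) = aM (aG g p) (φM g m))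
    (htrans : ∀ p q : P, ∃! m : M, q = aM p m)
    (hαG : ∀ (g : G) (p : P), α (aG g p) = φL g (α p))
    (hαM : ∀ (p : P) (m : M), α (aM p m) = α p * pd m) :
    -- (a) π(α p) is independent of p, hence so is π_*(P) = π((α p)⁻¹)
    (∀ p q : P, (QuotientGroup.mk (α p) : L ⧸ pd.range) = QuotientGroup.mk (α q)) ∧
    -- (b) π_*(P) is G-fixed: ᵍ(π_*(P)) = π((ᵍ(α p))⁻¹) = π_*(P)
    (∀ (g : G) (p : P),
      (QuotientGroup.mk ((φL g (α p))⁻¹) : L ⧸ pd.range) =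
        QuotientGroup.mk ((α p)⁻¹)) := by
  have key : ∀ p q : P, (α p)⁻¹ * α q ∈ pd.range := by
    intro p q
    obtain ⟨m, hm, -⟩ := htrans p q
    exact ⟨m, by rw [hm, hαM]; group⟩
  constructor
  · intro p q
    exact (QuotientGroup.eq).2 (key p q)
  · intro g p
    refine (QuotientGroup.eq).2 ?_
    obtain ⟨m, hm⟩ := key p (aG g p)
    rw [hαG] at hm
    have : φL g (α p) = α p * pd m := by
      rw [hm]; group
    refine ⟨ρ (α p) m, ?_⟩
    rw [hpeif1, inv_inv, this]
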